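/- Let D be a category that has all finite connected colimits, i.e., D has colimits of every functor from a finite connected category. Then the Grothendieck twist Tw(D) has all pushouts. -/

import Mathlib

open CategoryTheory CategoryTheory.Limits

universe v u

/-- An object of the Grothendieck twist `Tw(D)`: a finite index type together with a
family of objects of `D`. -/
structure TwObj (D : Type u) [Category.{v} D] : Type (max u 1) where
  ι : Type
  [fin : Finite ι]
  obj : ι → D

attribute [instance] TwObj.fin

/-- A morphism of the Grothendieck twist `Tw(D)`: a function of index types together with
componentwise morphisms of `D`. -/
structure TwHom {D : Type u} [Category.{v} D] (X Y : TwObj D) : Type (max v 1) where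
  toFun : X.ι → Y.ι
  map : ∀ i, X.obj i ⟶ Y.obj (toFun i)

theorem TwHom.hext {D : Type u} [Category.{v} D] {X Y : TwObj D} {f g : TwHom X Y}
    (h1 : f.toFun = g.toFun) (h2 : HEq f.map g.map) : f = g := by
  cases f; cases g; cases h1; cases h2; rfl

instance (D : Type u) [Category.{v} D] : Category (TwObj D) where
  Hom X Y := TwHom X Y
  id X := ⟨id, fun i => 𝟙 _⟩
  comp f g := ⟨g.toFun ∘ f.toFun, fun i => f.map i ≫ g.map (f.toFun i)⟩
  id_comp f := TwHom.hext rfl (heq_of_eq (funext fun i => Category.id_comp _))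
  comp_id f := TwHom.hext rfl (heq_of_eq (funext fun i => Category.comp_id _))
  assoc f g h := TwHom.hext rfl (heq_of_eq (funext fun i => Category.assoc _ _ _))

namespace TwPushAux

noncomputable section

variable {D : Type u} [Category.{v} D]

theorem ext' {X Y : TwObj D} {u v : X ⟶ Y} (h1 : ∀ i, u.toFun i = v.toFun i)
    (h2 : ∀ i, u.map i ≫ eqToHom (congrArg Y.obj (h1 i)) = v.map i) : u = v := by
  obtain ⟨u1, u2⟩ := u
  obtain ⟨v1, v2⟩ := v
  obtain rfl : u1 = v1 := funext h1
  have : u2 = v2 := funext fun i => by simpa using h2 i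
  rw [this]

theorem congr_toFun {X Y : TwObj D} {u v : X ⟶ Y} (h : u = v) (i : X.ι) :
    u.toFun i = v.toFun i := by rw [h]

theorem congr_map {X Y : TwObj D} {u v : X ⟶ Y} (h : u = v) (i : X.ι) :
    u.map i = v.map i ≫ eqToHom (congrArg Y.obj (congr_toFun h i).symm) := by
  subst h; simp

variable {A B C : TwObj D}

/-- The objects of the index category of the span. -/
def EObj (_f : A ⟶ B) (_g : A ⟶ C) : Type := A.ι ⊕ (B.ι ⊕ C.ι)

/-- Morphisms of the index category of the span. -/
inductive EHom (f : A ⟶ B) (g : A ⟶ C) : EObj f g → EObj f g → Type where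
  | id (x : EObj f g) : EHom f g x x
  | toB (a : A.ι) : EHom f g (Sum.inl a) (Sum.inr (Sum.inl (f.toFun a)))
  | toC (a : A.ι) : EHom f g (Sum.inl a) (Sum.inr (Sum.inr (g.toFun a)))

variable (f : A ⟶ B) (g : A ⟶ C)

instance : CategoryStruct (EObj f g) where
  Hom := EHom f g
  id := EHom.id
  comp m m' := match m, m' with
    | .id _, m' => m'
    | .toB a, .id _ => .toB a
    | .toC a, .id _ => .toC a

instance : Quiver.IsThin (EObj f g) := fun x y =>
  ⟨by intro (a : EHom f g x y) (b : EHom f g x y); cases a <;> cases b <;> rfl⟩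

instance : Category (EObj f g) := thin_category

instance : Finite (EObj f g) := inferInstanceAs (Finite (A.ι ⊕ (B.ι ⊕ C.ι)))

instance : Finite (ConnectedComponents (EObj f g)) :=
  inferInstanceAs (Finite (Quotient _))

instance (x y : EObj f g) : Finite (x ⟶ y) := Finite.of_subsingleton

/-- Object part of the diagram of the span over the index category. -/
def PsiObj : EObj f g → D
  | Sum.inl a => A.obj a
  | Sum.inr (Sum.inl b) => B.obj b
  | Sum.inr (Sum.inr c) => C.obj c

/-- Morphism part of the diagram of the span over the index category. -/
def PsiMap : ∀ {x y : EObj f g}, (x ⟶ y) → (PsiObj f g x ⟶ PsiObj f g y)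
  | _, _, .id _ => 𝟙 _
  | _, _, .toB a => f.map a
  | _, _, .toC a => g.map a

theorem psiMap_comp {x y z : EObj f g} (m : x ⟶ y) (m' : y ⟶ z) :
    PsiMap f g (m ≫ m') = PsiMap f g m ≫ PsiMap f g m' := by
  change EHom f g x y at m; change EHom f g y z at m'
  cases m <;> cases m' <;>
    first
      | (show PsiMap f g _ = PsiMap f g _ ≫ 𝟙 _; rw [Category.comp_id]; rfl)
      | (show PsiMap f g _ = 𝟙 _ ≫ PsiMap f g _; rw [Category.id_comp]; rfl)

/-- The diagram of the span over the index category. -/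
def Psi : EObj f g ⥤ D where
  obj := PsiObj f g
  map := PsiMap f g
  map_id x := rfl
  map_comp := psiMap_comp f g

/-- The component of an object of the index category. -/
def cc (x : EObj f g) : ConnectedComponents (EObj f g) := Quotient.mk'' x

theorem cc_hom {x y : EObj f g} (m : x ⟶ y) : cc f g x = cc f g y :=
  Quotient.sound (Zigzag.of_hom m)

/-- The finite-category structure on each connected component. -/
def compFinCategory (k : ConnectedComponents (EObj f g)) : FinCategory (ConnectedComponents.Component k) := by
  have hfin : Finite (ConnectedComponents.Component k) :=
    Finite.of_injective (fun e => e.obj) (by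
      intro a b hab
      cases a; cases b; dsimp at hab; subst hab; rfl)
  letI : Fintype (ConnectedComponents.Component k) := Fintype.ofFinite _
  letI : ∀ (x y : ConnectedComponents.Component k), Fintype (x ⟶ y) := fun x y =>
    letI : Finite (x ⟶ y) := Finite.of_injective (fun m : x ⟶ y => m.hom)
      (by intro a b _; ext; exact Subsingleton.elim _ _)
    Fintype.ofFinite _
  exact { fintypeObj := inferInstance, fintypeHom := inferInstance }

variable [∀ k : ConnectedComponents (EObj f g), HasColimitsOfShape (ConnectedComponents.Component k) D]

/-- The pushout object. -/
def PO : TwObj D where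
  ι := ConnectedComponents (EObj f g)
  obj k := colimit (ConnectedComponents.ι k ⋙ Psi f g)

/-- The colimit injections. -/
def ιPO (x : EObj f g) {k : ConnectedComponents (EObj f g)} (hx : cc f g x = k) :
    (Psi f g).obj x ⟶ (PO f g).obj k :=
  colimit.ι (ConnectedComponents.ι k ⋙ Psi f g) ⟨x, hx⟩

theorem ιPO_w {x y : EObj f g} (m : x ⟶ y) {k : ConnectedComponents (EObj f g)}
    (hx : cc f g x = k) (hy : cc f g y = k) :
    (Psi f g).map m ≫ ιPO f g y hy = ιPO f g x hx :=
  colimit.w (ConnectedComponents.ι k ⋙ Psi f g)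
    (show (⟨x, hx⟩ : ConnectedComponents.Component k) ⟶ ⟨y, hy⟩ from ObjectProperty.homMk m)

theorem ιPO_cast (x : EObj f g) {k k' : ConnectedComponents (EObj f g)}
    (hx : cc f g x = k) (hk : k = k') :
    ιPO f g x hx ≫ eqToHom (congrArg (PO f g).obj hk) = ιPO f g x (hx.trans hk) := by
  subst hk; exact Category.comp_id _

/-- The left injection. -/
def inB : B ⟶ PO f g where
  toFun b := cc f g (Sum.inr (Sum.inl b))
  map b := ιPO f g (Sum.inr (Sum.inl b)) rfl

/-- The right injection. -/
def inC : C ⟶ PO f g where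
  toFun c := cc f g (Sum.inr (Sum.inr c))
  map c := ιPO f g (Sum.inr (Sum.inr c)) rfl

theorem sq : f ≫ inB f g = g ≫ inC f g := by
  have h1 : ∀ a : A.ι, cc f g (Sum.inr (Sum.inl (f.toFun a)))
      = cc f g (Sum.inr (Sum.inr (g.toFun a))) := fun a =>
    (cc_hom f g (EHom.toB a)).symm.trans (cc_hom f g (EHom.toC a))
  apply ext' h1
  intro a
  show (f.map a ≫ ιPO f g (Sum.inr (Sum.inl (f.toFun a))) rfl) ≫ eqToHom _
      = g.map a ≫ ιPO f g (Sum.inr (Sum.inr (g.toFun a))) rfl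
  erw [Category.assoc, ιPO_cast f g _ rfl (h1 a)]
  exact (ιPO_w f g (EHom.toB a) (cc_hom f g (EHom.toC a)) _).trans
    (ιPO_w f g (EHom.toC a) (cc_hom f g (EHom.toC a)) _).symm

section Desc

variable {W : TwObj D} (pB : B ⟶ W) (pC : C ⟶ W) (hsq : f ≫ pB = g ≫ pC)

include hsq

/-- The underlying function of the descended morphism, before quotienting. -/
def qFun : EObj f g → W.ι
  | Sum.inl a => pB.toFun (f.toFun a)
  | Sum.inr (Sum.inl b) => pB.toFun b
  | Sum.inr (Sum.inr c) => pC.toFun c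

/-- The components of the descended morphism, before quotienting. -/
def qMap : ∀ x : EObj f g, (Psi f g).obj x ⟶ W.obj (qFun f g pB pC x)
  | Sum.inl a => f.map a ≫ pB.map (f.toFun a)
  | Sum.inr (Sum.inl b) => pB.map b
  | Sum.inr (Sum.inr c) => pC.map c

theorem qFun_hom {x y : EObj f g} (m : x ⟶ y) :
    qFun f g pB pC x = qFun f g pB pC y := by
  change EHom f g x y at m
  cases m with
  | id => rfl
  | toB a => rfl
  | toC a => exact congr_toFun hsq a

theorem qFun_zigzag {x y : EObj f g} (h : Zigzag x y) :
    qFun f g pB pC x = qFun f g pB pC y := by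
  induction h with
  | refl => rfl
  | tail _ z ih =>
      rcases z with ⟨⟨m⟩⟩ | ⟨⟨m⟩⟩
      · exact ih.trans (qFun_hom f g pB pC hsq m)
      · exact ih.trans (qFun_hom f g pB pC hsq m).symm

theorem qMap_hom {x y : EObj f g} (m : x ⟶ y) :
    (Psi f g).map m ≫ qMap f g pB pC y
      = qMap f g pB pC x ≫ eqToHom (congrArg W.obj (qFun_hom f g pB pC hsq m)) := by
  change EHom f g x y at m
  cases m with
  | id => exact (Category.id_comp _).trans (Category.comp_id _).symm
  | toB a => exact (Category.comp_id _).symm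
  | toC a =>
      have hm := congr_map hsq a
      show g.map a ≫ pC.map (g.toFun a) = (f.map a ≫ pB.map (f.toFun a)) ≫ eqToHom _
      have : (f ≫ pB).map a = (g ≫ pC).map a ≫ eqToHom
          (congrArg W.obj (congr_toFun hsq a).symm) := congr_map hsq a
      calc (g.map a ≫ pC.map (g.toFun a)) = (g ≫ pC).map a := rfl
        _ = (f ≫ pB).map a ≫ eqToHom (congrArg W.obj (congr_toFun hsq a)) := by
            rw [this]; simp
        _ = (f.map a ≫ pB.map (f.toFun a)) ≫ eqToHom _ := rfl

/-- Underlying function of the descended morphism. -/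
def descToFun : ConnectedComponents (EObj f g) → W.ι :=
  Quotient.lift (qFun f g pB pC) (fun _ _ hab => qFun_zigzag f g pB pC hsq hab)

/-- The cocone used to define the components of the descended morphism. -/
def descCocone (k : ConnectedComponents (EObj f g)) :
    Cocone (ConnectedComponents.ι k ⋙ Psi f g) where
  pt := W.obj (descToFun f g pB pC hsq k)
  ι := {
    app := fun e => qMap f g pB pC e.obj ≫
      eqToHom (congrArg W.obj
        (show qFun f g pB pC e.obj = descToFun f g pB pC hsq k from
          congrArg (descToFun f g pB pC hsq) e.property))
    naturality := by
      intro e e' m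
      have := qMap_hom f g pB pC hsq (show e.obj ⟶ e'.obj from m.hom)
      show (Psi f g).map m.hom ≫ _ = _ ≫ 𝟙 _
      rw [← Category.assoc, this]
      simp }

/-- The descended morphism. -/
def descHom : PO f g ⟶ W where
  toFun := descToFun f g pB pC hsq
  map := fun (k : ConnectedComponents (EObj f g)) =>
    colimit.desc (ConnectedComponents.ι k ⋙ Psi f g) (descCocone f g pB pC hsq k)

theorem ι_descHom (x : EObj f g) {k : ConnectedComponents (EObj f g)} (hx : cc f g x = k) :
    ιPO f g x hx ≫ (descHom f g pB pC hsq).map k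
      = qMap f g pB pC x ≫ eqToHom (congrArg W.obj
          (show qFun f g pB pC x = descToFun f g pB pC hsq k from
            congrArg (descToFun f g pB pC hsq) hx)) :=
  colimit.ι_desc (descCocone f g pB pC hsq k) ⟨x, hx⟩

theorem descHom_fac_left : inB f g ≫ descHom f g pB pC hsq = pB := by
  refine ext' (fun b => rfl) fun b => ?_
  show (ιPO f g (Sum.inr (Sum.inl b)) rfl ≫ (descHom f g pB pC hsq).map _) ≫ eqToHom _
      = pB.map b
  erw [ι_descHom]
  simp [qMap]; exact (Category.comp_id _).trans (Category.comp_id _)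

theorem descHom_fac_right : inC f g ≫ descHom f g pB pC hsq = pC := by
  refine ext' (fun c => rfl) fun c => ?_
  show (ιPO f g (Sum.inr (Sum.inr c)) rfl ≫ (descHom f g pB pC hsq).map _) ≫ eqToHom _
      = pC.map c
  erw [ι_descHom]
  simp [qMap]; exact (Category.comp_id _).trans (Category.comp_id _)

variable {f g pB pC}

theorem descHom_uniq (m : PO f g ⟶ W) (hB : inB f g ≫ m = pB) (hC : inC f g ≫ m = pC) :
    m = descHom f g pB pC hsq := by
  -- the underlying functions agree
  have h1 : ∀ k, m.toFun k = descToFun f g pB pC hsq k := by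
    intro k
    induction k using Quotient.inductionOn' with
    | h x =>
      rcases x with a | b | c
      · have e : cc f g (Sum.inl a) = cc f g (Sum.inr (Sum.inl (f.toFun a))) :=
          cc_hom f g (EHom.toB a)
        show m.toFun (cc f g (Sum.inl a)) = descToFun f g pB pC hsq (cc f g (Sum.inl a))
        rw [e]
        exact congr_toFun hB (f.toFun a)
      · exact congr_toFun hB b
      · exact congr_toFun hC c
  -- component-wise comparison against the colimit injections
  have masterB : ∀ (b : B.ι) (k) (hx : cc f g (Sum.inr (Sum.inl b)) = k),
      ιPO f g (Sum.inr (Sum.inl b)) hx ≫ m.map k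
        = qMap f g pB pC (Sum.inr (Sum.inl b)) ≫ eqToHom (congrArg W.obj
            ((congrArg (descToFun f g pB pC hsq) hx).trans (h1 k).symm)) := by
    intro b k hx
    subst hx
    exact congr_map hB b
  have masterC : ∀ (c : C.ι) (k) (hx : cc f g (Sum.inr (Sum.inr c)) = k),
      ιPO f g (Sum.inr (Sum.inr c)) hx ≫ m.map k
        = qMap f g pB pC (Sum.inr (Sum.inr c)) ≫ eqToHom (congrArg W.obj
            ((congrArg (descToFun f g pB pC hsq) hx).trans (h1 k).symm)) := by
    intro c k hx
    subst hx
    exact congr_map hC c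
  have master : ∀ (x : EObj f g) (k) (hx : cc f g x = k),
      ιPO f g x hx ≫ m.map k
        = qMap f g pB pC x ≫ eqToHom (congrArg W.obj
            ((congrArg (descToFun f g pB pC hsq) hx).trans (h1 k).symm)) := by
    intro x k hx
    rcases x with a | b | c
    · -- use the zig-zag through `a`
      have hy : cc f g (Sum.inr (Sum.inl (f.toFun a))) = k :=
        (cc_hom f g (EHom.toB a)).symm.trans hx
      have e0 : ιPO f g (Sum.inl a) hx
          = (Psi f g).map (EHom.toB a) ≫ ιPO f g (Sum.inr (Sum.inl (f.toFun a))) hy :=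
        (ιPO_w f g (EHom.toB a) hx hy).symm
      rw [e0, Category.assoc, masterB (f.toFun a) k hy]
      show f.map a ≫ qMap f g pB pC (Sum.inr (Sum.inl (f.toFun a))) ≫ eqToHom _
          = (f.map a ≫ pB.map (f.toFun a)) ≫ eqToHom _
      simp [qMap]; rfl
    · exact masterB b k hx
    · exact masterC c k hx
  apply ext' h1
  intro (k : ConnectedComponents (EObj f g))
  apply colimit.hom_ext
  rintro ⟨x, hx⟩
  erw [← Category.assoc]
  have : colimit.ι (ConnectedComponents.ι k ⋙ Psi f g) ⟨x, hx⟩ ≫ m.map k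
      = qMap f g pB pC x ≫ eqToHom (congrArg W.obj
          ((congrArg (descToFun f g pB pC hsq) hx).trans (h1 k).symm)) := master x k hx
  erw [this, Category.assoc, eqToHom_trans]
  exact (ι_descHom f g pB pC hsq x hx).symm

end Desc

end

end TwPushAux

/-- If `D` has all finite connected colimits, then the Grothendieck twist `Tw(D)` has all
pushouts. -/
theorem tw_hasPushouts_of_finite_connected_colimits (D : Type u) [Category.{v} D]
    (h : ∀ (J : Type) (_ : SmallCategory J) (_ : FinCategory J) (_ : IsConnected J),
      HasColimitsOfShape J D) :
    HasPushouts (TwObj D) := by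
  haveI : ∀ {A B C : TwObj D} {f : A ⟶ B} {g : A ⟶ C}, HasColimit (span f g) := by
    intro A B C f g
    haveI : ∀ k : ConnectedComponents (TwPushAux.EObj f g), HasColimitsOfShape (ConnectedComponents.Component k) D :=
      fun k => h _ _ (TwPushAux.compFinCategory f g k) inferInstance
    exact HasColimit.mk
      ⟨PushoutCocone.mk (TwPushAux.inB f g) (TwPushAux.inC f g) (TwPushAux.sq f g),
        PushoutCocone.IsColimit.mk (TwPushAux.sq f g)
          (fun s => TwPushAux.descHom f g s.inl s.inr s.condition)
          (fun s => TwPushAux.descHom_fac_left f g s.inl s.inr s.condition)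
          (fun s => TwPushAux.descHom_fac_right f g s.inl s.inr s.condition)
          (fun s m h1 h2 => TwPushAux.descHom_uniq s.condition m h1 h2)⟩
  exact hasPushouts_of_hasColimit_span (TwObj D)
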